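/- Let 0 ≤ S < T < ∞, d ∈ ℕ, n ∈ ℕ, and let k : Δ_{n+1}(S,T) → ℝ^{d×d} be measurable. If there exists a ∈ L²((0,T−S)^n;ℝ) such that |k(t_0,t_1,…,t_n)|_op ≤ a(t_0−t_1, t_1−t_2, …, t_{n−1}−t_n) for a.e. (t_0,t_1,…,t_n) ∈ Δ_{n+1}(S,T), then k ∈ V_{n+1}(S,T;ℝ^{d×d}) and ⦀k⦀_{V_{n+1}} ≤ ‖a‖_{L²((0,T−S)^n)}. -/

import Mathlib

open MeasureTheory
open scoped ENNReal

noncomputable section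

/-- Frobenius norm of a real matrix. -/
def frobNorm {m n : ℕ} (A : Matrix (Fin m) (Fin n) ℝ) : ℝ :=
  Real.sqrt (∑ i, ∑ j, (A i j) ^ 2)

/-- Operator norm of a real matrix with respect to the Euclidean norms. -/
def opNorm {m n : ℕ} (A : Matrix (Fin m) (Fin n) ℝ) : ℝ :=
  ‖LinearMap.toContinuousLinearMap (Matrix.toEuclideanLin A)‖

/-- The open simplex `Δ_n(S,T) = {(t₁,…,t_n) : T > t₁ > ⋯ > t_n > S}`. -/
def simplex (S T : ℝ) (n : ℕ) : Set (Fin n → ℝ) :=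
  {t | (∀ i, t i ∈ Set.Ioo S T) ∧ ∀ i j : Fin n, i < j → t j < t i}

/-- The open cube `(0,c)ⁿ`. -/
def cubeSet (c : ℝ) (n : ℕ) : Set (Fin n → ℝ) :=
  {x | ∀ i, x i ∈ Set.Ioo 0 c}

/-- Entrywise measurability of a matrix-valued kernel. -/
def MMeasurable {d₁ d₂ n : ℕ} (f : (Fin n → ℝ) → Matrix (Fin d₁) (Fin d₂) ℝ) : Prop :=
  ∀ p q, Measurable fun t => f t p q

/-- Square of the L² norm (Frobenius norm) over the simplex, as an extended real. -/
def l2sqE {d₁ d₂ : ℕ} (S T : ℝ) {n : ℕ}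
    (f : (Fin n → ℝ) → Matrix (Fin d₁) (Fin d₂) ℝ) : ℝ≥0∞ :=
  ∫⁻ t in simplex S T n, ENNReal.ofReal (frobNorm (f t) ^ 2)

/-- L² norm over the simplex. -/
def l2Norm {d₁ d₂ : ℕ} (S T : ℝ) {n : ℕ}
    (f : (Fin n → ℝ) → Matrix (Fin d₁) (Fin d₂) ℝ) : ℝ :=
  ((l2sqE S T f) ^ (1/2 : ℝ)).toReal

/-- Membership in `L²(Δ_n(S,T))`. -/
def MemL2 {d₁ d₂ : ℕ} (S T : ℝ) {n : ℕ}
    (f : (Fin n → ℝ) → Matrix (Fin d₁) (Fin d₂) ℝ) : Prop :=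
  MMeasurable f ∧ l2sqE S T f < ⊤

/-- The Volterra norm `⦀k⦀_{V_{n+1}(S,T)}` as an extended real:
ess sup over `t ∈ (S,T)` of the L²(op-norm) over `Δ_n(t,T)` of `k(·,t)`. -/
def vNormE {d : ℕ} (S T : ℝ) {n : ℕ}
    (k : (Fin (n+1) → ℝ) → Matrix (Fin d) (Fin d) ℝ) : ℝ≥0∞ :=
  essSup
    (fun t : ℝ =>
      (∫⁻ s in simplex t T n, ENNReal.ofReal (opNorm (k (Fin.snoc s t)) ^ 2)) ^ (1/2 : ℝ))
    (volume.restrict (Set.Ioo S T))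

def vNorm {d : ℕ} (S T : ℝ) {n : ℕ}
    (k : (Fin (n+1) → ℝ) → Matrix (Fin d) (Fin d) ℝ) : ℝ :=
  (vNormE S T k).toReal

/-- Membership in `V_{n+1}(S,T;ℝ^{d×d})`. -/
def MemV {d : ℕ} (S T : ℝ) {n : ℕ}
    (k : (Fin (n+1) → ℝ) → Matrix (Fin d) (Fin d) ℝ) : Prop :=
  MMeasurable k ∧ vNormE S T k < ⊤

/-- The `▷`-product. -/
def trprod {d₁ d₂ d₃ m n : ℕ}
    (f : (Fin (m+1) → ℝ) → Matrix (Fin d₁) (Fin d₂) ℝ)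
    (g : (Fin (n+1) → ℝ) → Matrix (Fin d₂) (Fin d₃) ℝ) :
    (Fin (m+n+1) → ℝ) → Matrix (Fin d₁) (Fin d₃) ℝ :=
  fun t =>
    f (fun i => t ⟨i.1, by have := i.2; omega⟩) *
    g (fun i => t ⟨m + i.1, by have := i.2; omega⟩)

/-- Recasting the arity of a kernel along an equality of naturals. -/
def reindexKer {d₁ d₂ a b : ℕ} (h : a = b)
    (f : (Fin a → ℝ) → Matrix (Fin d₁) (Fin d₂) ℝ) :
    (Fin b → ℝ) → Matrix (Fin d₁) (Fin d₂) ℝ :=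
  fun t => f (fun i => t (Fin.cast h i))

/-- Coefficient sequences of ⋆-Volterra kernels. -/
abbrev KSeq (d : ℕ) := ∀ n : ℕ, (Fin (n+1) → ℝ) → Matrix (Fin d) (Fin d) ℝ
/-- Coefficient sequences of adapted L²-processes. -/
abbrev LSeq (d d₁ : ℕ) := ∀ n : ℕ, (Fin (n+1) → ℝ) → Matrix (Fin d) (Fin d₁) ℝ
/-- Coefficient sequences of ∗-Volterra kernels. -/
abbrev JSeq (d : ℕ) := ∀ n : ℕ, (Fin (n+2) → ℝ) → Matrix (Fin d) (Fin d) ℝ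

/-- The graded ⋆-product `(K ⋆ ξ)_n = Σ_{j≤n} K_{n-j} ▷ ξ_j`. -/
def starP {d d₁ : ℕ} (K : KSeq d) (ξ : LSeq d d₁) : LSeq d d₁ :=
  fun n => ∑ j : Fin (n+1),
    reindexKer (by have := j.2; omega) (trprod (K (n - j.1)) (ξ j.1))

def KNormE {d : ℕ} (S T : ℝ) (K : KSeq d) : ℝ≥0∞ := ∑' n, vNormE S T (K n)
def KNorm {d : ℕ} (S T : ℝ) (K : KSeq d) : ℝ := (KNormE S T K).toReal
/-- Membership in `K(S,T)` (the ⋆-Volterra kernels). -/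
def MemK {d : ℕ} (S T : ℝ) (K : KSeq d) : Prop :=
  (∀ n, MMeasurable (K n)) ∧ KNormE S T K < ⊤

def LsqE {d d₁ : ℕ} (S T : ℝ) (ξ : LSeq d d₁) : ℝ≥0∞ := ∑' n, l2sqE S T (ξ n)
def LNorm {d d₁ : ℕ} (S T : ℝ) (ξ : LSeq d d₁) : ℝ := ((LsqE S T ξ) ^ (1/2 : ℝ)).toReal
/-- Membership in `L^{d×d₁}(S,T)`. -/
def MemL {d d₁ : ℕ} (S T : ℝ) (ξ : LSeq d d₁) : Prop :=
  (∀ n, MMeasurable (ξ n)) ∧ LsqE S T ξ < ⊤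

/-- Equality in `L^{d×d₁}(S,T)` (and in `K(S,T)`): coefficientwise a.e. equality
on the corresponding simplices. -/
def LEq {d d₁ : ℕ} (S T : ℝ) (f g : LSeq d d₁) : Prop :=
  ∀ n : ℕ, f n =ᵐ[volume.restrict (simplex S T (n+1))] g n

/-- The `∗`-product of two multi-parameter kernels. -/
def astProd {d₁ d₂ d₃ a b : ℕ}
    (j : (Fin (a+2) → ℝ) → Matrix (Fin d₁) (Fin d₂) ℝ)
    (g : (Fin (b+2) → ℝ) → Matrix (Fin d₂) (Fin d₃) ℝ) :
    (Fin (a+b+2) → ℝ) → Matrix (Fin d₁) (Fin d₃) ℝ :=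
  fun t => Matrix.of fun p q =>
    ∫ s in Set.Ioo (t ⟨a+1, by omega⟩) (t ⟨a, by omega⟩),
      (j (Fin.snoc (fun i : Fin (a+1) => t ⟨i.1, by have := i.2; omega⟩) s) *
       g (Fin.cons s (fun i : Fin (b+1) => t ⟨a+1+i.1, by have := i.2; omega⟩))) p q

/-- The `∗`-product of a multi-parameter kernel with an L²-type kernel
(lower integration limit `S` when `b = 0`). -/
def astProdL {d₁ d₂ d₃ a b : ℕ} (S : ℝ)
    (j : (Fin (a+2) → ℝ) → Matrix (Fin d₁) (Fin d₂) ℝ)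
    (f : (Fin (b+1) → ℝ) → Matrix (Fin d₂) (Fin d₃) ℝ) :
    (Fin (a+b+1) → ℝ) → Matrix (Fin d₁) (Fin d₃) ℝ :=
  fun t => Matrix.of fun p q =>
    ∫ s in Set.Ioo (if h : 0 < b then t ⟨a+1, by omega⟩ else S) (t ⟨a, by omega⟩),
      (j (Fin.snoc (fun i : Fin (a+1) => t ⟨i.1, by have := i.2; omega⟩) s) *
       f (Fin.cons s (fun i : Fin b => t ⟨a+1+i.1, by have := i.2; omega⟩))) p q

def jNormE {d : ℕ} (S T : ℝ) {n : ℕ}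
    (Jn : (Fin (n+2) → ℝ) → Matrix (Fin d) (Fin d) ℝ) : ℝ≥0∞ :=
  (∫⁻ t in simplex S T (n+2), ENNReal.ofReal (opNorm (Jn t) ^ 2)) ^ (1/2 : ℝ)

def JNormE {d : ℕ} (S T : ℝ) (J : JSeq d) : ℝ≥0∞ := ∑' n, jNormE S T (J n)
def JNorm {d : ℕ} (S T : ℝ) (J : JSeq d) : ℝ := (JNormE S T J).toReal
/-- Membership in `J(S,T)` (the ∗-Volterra kernels). -/
def MemJ {d : ℕ} (S T : ℝ) (J : JSeq d) : Prop :=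
  (∀ n, MMeasurable (J n)) ∧ JNormE S T J < ⊤

/-- Equality in `J(S,T)`. -/
def JEq {d : ℕ} (S T : ℝ) (J J' : JSeq d) : Prop :=
  ∀ n : ℕ, J n =ᵐ[volume.restrict (simplex S T (n+2))] J' n

/-- Graded product `J(S,T) × J(S,T) → J(S,T)`. -/
def astP {d : ℕ} (J J' : JSeq d) : JSeq d :=
  fun n => ∑ k : Fin (n+1),
    reindexKer (by have := k.2; omega) (astProd (J (n - k.1)) (J' k.1))

/-- Graded product `J(S,T) × L(S,T) → L(S,T)` (also `J(S,T) × K(S,T) → K(S,T)`). -/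
def astPL {d d₁ : ℕ} (S : ℝ) (J : JSeq d) (ξ : LSeq d d₁) : LSeq d d₁ :=
  fun n => ∑ k : Fin (n+1),
    reindexKer (by have := k.2; omega) (astProdL S (J (n - k.1)) (ξ k.1))

/-- Graded product `K(S,T) × J(S,T) → J(S,T)`. -/
def starPJ {d : ℕ} (K : KSeq d) (J : JSeq d) : JSeq d :=
  fun n => ∑ k : Fin (n+1),
    reindexKer (by have := k.2; omega) (trprod (K (n - k.1)) (J k.1))

/-- The `k`-th term of the backward ⋆-product. -/
def bstarTerm {d d₁ : ℕ} (T : ℝ) (K : KSeq d) (ξ : LSeq d d₁) (n : ℕ)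
    (t : Fin (n+1) → ℝ) (k : ℕ) : Matrix (Fin d) (Fin d₁) ℝ :=
  if h : n ≤ k then
    Matrix.of fun p q =>
      ∫ s in simplex (t 0) T (k - n),
        (K (k - n) (Fin.snoc s (t 0)) *
         ξ k (fun i => Fin.append s t (Fin.cast (by omega) i))) p q
  else 0

/-- The backward ⋆-product. -/
def bstarP {d d₁ : ℕ} (T : ℝ) (K : KSeq d) (ξ : LSeq d d₁) : LSeq d d₁ :=
  fun n t => ∑' k : ℕ, bstarTerm T K ξ n t k

/-- The `k`-th term of the backward ∗-product. -/
def bastTerm {d d₁ : ℕ} (T : ℝ) (J : JSeq d) (ξ : LSeq d d₁) (n : ℕ)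
    (t : Fin (n+1) → ℝ) (k : ℕ) : Matrix (Fin d) (Fin d₁) ℝ :=
  if h : n ≤ k then
    Matrix.of fun p q =>
      ∫ s in simplex (t 0) T (k - n + 1),
        (J (k - n) (Fin.snoc s (t 0)) *
         ξ k (fun i => Fin.append s (fun m : Fin n => t m.succ) (Fin.cast (by omega) i))) p q
  else 0

/-- The backward ∗-product. -/
def bastP {d d₁ : ℕ} (T : ℝ) (J : JSeq d) (ξ : LSeq d d₁) : LSeq d d₁ :=
  fun n t => ∑' k : ℕ, bastTerm T J ξ n t k

/-- Coefficientwise matrix transpose. -/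
def transK {d : ℕ} (K : KSeq d) : KSeq d := fun n t => (K n t).transpose
/-- Coefficientwise matrix transpose. -/
def transJ {d : ℕ} (J : JSeq d) : JSeq d := fun n t => (J n t).transpose

/-- Inner product of `L^d(S,T)`. -/
def Linner {d : ℕ} (S T : ℝ) (φ ψ : LSeq d 1) : ℝ :=
  ∑' n, ∫ t in simplex S T (n+1), ∑ i, φ n t i 0 * ψ n t i 0

/-- `R` is the ⋆-resolvent of `K` on `(S,T)`. -/
def IsStarResolvent {d : ℕ} (S T : ℝ) (K R : KSeq d) : Prop :=
  MemK S T R ∧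
  LEq S T R (fun n t => K n t + starP K R n t) ∧
  LEq S T R (fun n t => K n t + starP R K n t)

/-- `Q` is the ∗-resolvent of `J` on `(S,T)`. -/
def IsAstResolvent {d : ℕ} (S T : ℝ) (J Q : JSeq d) : Prop :=
  MemJ S T Q ∧
  JEq S T Q (fun n t => J n t + astP J Q n t) ∧
  JEq S T Q (fun n t => J n t + astP Q J n t)

/-- `(Q,R)` is the `(∗,⋆)`-resolvent of `(J,K)` on `(S,T)`. -/
def IsAstStarResolvent {d : ℕ} (S T : ℝ) (J : JSeq d) (K : KSeq d)
    (Q : JSeq d) (R : KSeq d) : Prop :=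
  MemJ S T Q ∧ MemK S T R ∧
  JEq S T Q (fun n t => J n t + astP J Q n t + starPJ K Q n t) ∧
  JEq S T Q (fun n t => J n t + astP Q J n t + starPJ R J n t) ∧
  LEq S T R (fun n t => K n t + astPL S J R n t + starP K R n t) ∧
  LEq S T R (fun n t => K n t + astPL S Q K n t + starP R K n t)

/-- The unit of `K(S,T)`: `(I_d, 0, 0, …)`. -/
def unitK (d : ℕ) : KSeq d := fun n =>
  match n with
  | 0 => fun _ => (1 : Matrix (Fin d) (Fin d) ℝ)
  | _ + 1 => fun _ => 0

/-- `starPow K m = K^{⋆(m+1)}`. -/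
def starPow {d : ℕ} (K : KSeq d) : ℕ → KSeq d
  | 0 => K
  | m + 1 => starP K (starPow K m)



lemma measurableSet_simplex (S T : ℝ) (n : ℕ) : MeasurableSet (simplex S T n) := by
  have : simplex S T n =
      (⋂ i, {t : Fin n → ℝ | t i ∈ Set.Ioo S T}) ∩
      ⋂ i, ⋂ j, ⋂ _ : i < j, {t : Fin n → ℝ | t j < t i} := by
    ext t; simp [simplex, Set.mem_iInter]
  rw [this]
  refine MeasurableSet.inter ?_ ?_
  · exact MeasurableSet.iInter fun i => (measurable_pi_apply i) measurableSet_Ioo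
  · exact MeasurableSet.iInter fun i => MeasurableSet.iInter fun j =>
      MeasurableSet.iInter fun _ =>
        measurableSet_lt (measurable_pi_apply j) (measurable_pi_apply i)

lemma measurableSet_cubeSet (c : ℝ) (n : ℕ) : MeasurableSet (cubeSet c n) := by
  have : cubeSet c n = ⋂ i, {t : Fin n → ℝ | t i ∈ Set.Ioo 0 c} := by
    ext t; simp [cubeSet, Set.mem_iInter]
  rw [this]
  exact MeasurableSet.iInter fun i => (measurable_pi_apply i) measurableSet_Ioo

def diffMap (n : ℕ) (t0 : ℝ) (s : Fin n → ℝ) : Fin n → ℝ :=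
  fun i => s i - (if h : (i:ℕ)+1 < n then s ⟨(i:ℕ)+1, h⟩ else t0)

def diffLin (n : ℕ) : (Fin n → ℝ) →ₗ[ℝ] (Fin n → ℝ) where
  toFun s := fun i => s i - (if h : (i:ℕ)+1 < n then s ⟨(i:ℕ)+1, h⟩ else 0)
  map_add' s t := by funext i; by_cases h : (i:ℕ)+1 < n <;> simp [h] <;> ring
  map_smul' c s := by funext i; by_cases h : (i:ℕ)+1 < n <;> simp [h] <;> ring

lemma diffLin_apply (n : ℕ) (s : Fin n → ℝ) (i : Fin n) :
    diffLin n s i = s i - (if h : (i:ℕ)+1 < n then s ⟨(i:ℕ)+1, h⟩ else 0) := rfl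

lemma diffLin_det (n : ℕ) : LinearMap.det (diffLin n) = 1 := by
  rw [← LinearMap.det_toMatrix']
  rw [Matrix.det_of_upperTriangular (M := LinearMap.toMatrix' (diffLin n)) ?_]
  · refine Finset.prod_eq_one fun i _ => ?_
    rw [LinearMap.toMatrix'_apply, diffLin_apply]
    have h1 : (if (i:Fin n) = i then (1:ℝ) else 0) = 1 := if_pos rfl
    by_cases h : (i:ℕ)+1 < n
    · rw [dif_pos h, Pi.single_apply, Pi.single_apply, h1, if_neg (by simp [Fin.ext_iff])]
      ring
    · rw [dif_neg h, Pi.single_apply, h1]; ring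
  · intro i j hji
    have hji' : (j:ℕ) < (i:ℕ) := hji
    rw [LinearMap.toMatrix'_apply, diffLin_apply]
    have h1 : (if (i:Fin n) = j then (1:ℝ) else 0) = 0 := by
      rw [if_neg]; intro h; rw [h] at hji'; omega
    by_cases h : (i:ℕ)+1 < n
    · rw [dif_pos h, Pi.single_apply, Pi.single_apply, h1, if_neg (by intro hh; rw [Fin.ext_iff] at hh; simp at hh; omega)]
      ring
    · rw [dif_neg h, Pi.single_apply, h1]; ring

lemma diffMap_eq (n : ℕ) (t0 : ℝ) :
    diffMap n t0 = (fun x => x + fun i : Fin n => if (i:ℕ)+1 < n then 0 else -t0) ∘ (diffLin n) := by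
  funext s
  funext i
  by_cases h : (i:ℕ)+1 < n <;> simp [diffMap, diffLin, h] <;> ring

lemma diffMap_measurePreserving (n : ℕ) (t0 : ℝ) :
    MeasurePreserving (diffMap n t0) (volume : Measure (Fin n → ℝ)) volume := by
  have hLmeas : Measurable (diffLin n) := (diffLin n).continuous_of_finiteDimensional.measurable
  have hmapL : Measure.map (diffLin n) volume = volume := by
    have h := Real.map_linearMap_volume_pi_eq_smul_volume_pi (f := diffLin n)
      (by rw [diffLin_det]; norm_num)
    rw [diffLin_det] at h
    simpa using h
  constructor
  · rw [diffMap_eq]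
    exact (measurable_add_const _).comp hLmeas
  · rw [diffMap_eq, ← Measure.map_map (measurable_add_const _) hLmeas, hmapL]
    exact map_add_right_eq_self volume _


lemma snoc_mem_simplex {S T t0 : ℝ} {n : ℕ} (ht : t0 ∈ Set.Ioo S T)
    {s : Fin n → ℝ} (hs : s ∈ simplex t0 T n) :
    (Fin.snoc s t0 : Fin (n+1) → ℝ) ∈ simplex S T (n+1) := by
  constructor
  · intro i
    refine Fin.lastCases ?_ ?_ i
    · rw [Fin.snoc_last]; exact ht
    · intro j; rw [Fin.snoc_castSucc]
      exact ⟨lt_trans ht.1 (hs.1 j).1, (hs.1 j).2⟩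
  · intro i j hij
    have hi : i ≠ Fin.last n := (lt_of_lt_of_le hij (Fin.le_last j)).ne
    rcases Fin.exists_castSucc_eq.mpr hi with ⟨i', rfl⟩
    rcases eq_or_ne j (Fin.last n) with rfl | hj
    · rw [Fin.snoc_last, Fin.snoc_castSucc]; exact (hs.1 i').1
    · rcases Fin.exists_castSucc_eq.mpr hj with ⟨j', rfl⟩
      rw [Fin.snoc_castSucc, Fin.snoc_castSucc]
      exact hs.2 i' j' (Fin.castSucc_lt_castSucc_iff.mp hij)

lemma snoc_diff_eq {n : ℕ} (t0 : ℝ) (s : Fin n → ℝ) :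
    (fun i : Fin n => (Fin.snoc s t0 : Fin (n+1) → ℝ) i.castSucc
      - (Fin.snoc s t0 : Fin (n+1) → ℝ) i.succ) = diffMap n t0 s := by
  funext i
  by_cases h : (i:ℕ)+1 < n
  · have h1 : (i.succ : Fin (n+1)) = Fin.castSucc ⟨(i:ℕ)+1, h⟩ := by
      rw [Fin.ext_iff]; simp
    rw [h1, Fin.snoc_castSucc, Fin.snoc_castSucc]
    show s i - s ⟨(i:ℕ)+1, h⟩ = s i - _
    rw [dif_pos h]
  · have h1 : (i.succ : Fin (n+1)) = Fin.last n := by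
      rw [Fin.ext_iff]; simp only [Fin.val_succ, Fin.val_last]; omega
    rw [h1, Fin.snoc_castSucc, Fin.snoc_last]
    show s i - t0 = s i - _
    rw [dif_neg h]

lemma diffMap_mem_cube {S T t0 : ℝ} {n : ℕ} (hS : S < t0) (hT : t0 < T)
    {s : Fin n → ℝ} (hs : s ∈ simplex t0 T n) :
    diffMap n t0 s ∈ cubeSet (T - S) n := by
  intro i
  rw [Set.mem_Ioo]
  show 0 < s i - _ ∧ s i - _ < T - S
  by_cases h : (i:ℕ)+1 < n
  · rw [dif_pos h]
    have hlt : s ⟨(i:ℕ)+1, h⟩ < s i := hs.2 i ⟨(i:ℕ)+1, h⟩ (by simp [Fin.lt_def])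
    have h1 := hs.1 i
    have h2 := hs.1 ⟨(i:ℕ)+1, h⟩
    rw [Set.mem_Ioo] at h1 h2
    constructor
    · linarith
    · linarith [h1.2, h2.1]
  · rw [dif_neg h]
    have h1 := hs.1 i
    rw [Set.mem_Ioo] at h1
    exact ⟨by linarith [h1.1], by linarith [h1.2]⟩

lemma snoc_measurePreserving (n : ℕ) :
    MeasurePreserving (fun p : ℝ × (Fin n → ℝ) => (Fin.snoc p.2 p.1 : Fin (n+1) → ℝ))
      ((volume : Measure ℝ).prod (volume : Measure (Fin n → ℝ))) volume := by
  have h := ((measurePreserving_piFinSuccAbove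
      (fun _ : Fin (n+1) => (volume : Measure ℝ)) (Fin.last n)).symm)
  have heq : ⇑(MeasurableEquiv.piFinSuccAbove (fun _ : Fin (n+1) => ℝ) (Fin.last n)).symm
      = fun p : ℝ × (Fin n → ℝ) => (Fin.snoc p.2 p.1 : Fin (n+1) → ℝ) := by
    funext p
    show (Fin.insertNthEquiv (fun _ => ℝ) (Fin.last n)) p = _
    funext j
    rw [Fin.insertNthEquiv_apply]
    exact congrFun (Fin.insertNth_last' p.1 p.2) j
  rw [heq] at h
  have hv : (volume : Measure (Fin (n+1) → ℝ)) = Measure.pi fun _ => volume := volume_pi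
  have hv2 : (volume : Measure (Fin n → ℝ))
      = Measure.pi fun _ : Fin n => (volume : Measure ℝ) := volume_pi
  rw [hv, hv2]
  exact h

/-- If a measurable `k : Δ_{n+1}(S,T) → ℝ^{d×d}` is dominated in operator norm,
a.e. on the simplex, by `a(t₀−t₁, …, t_{n−1}−t_n)` for some `a ∈ L²((0,T−S)ⁿ)`, then
`k ∈ V_{n+1}(S,T;ℝ^{d×d})` and `⦀k⦀_{V_{n+1}} ≤ ‖a‖_{L²((0,T−S)ⁿ)}`. -/
theorem stmt1 (S T : ℝ) (hS : 0 ≤ S) (hST : S < T) (d : ℕ) (hd : 0 < d) (n : ℕ) (hn : 0 < n)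
    (k : (Fin (n+1) → ℝ) → Matrix (Fin d) (Fin d) ℝ) (hk : MMeasurable k)
    (a : (Fin n → ℝ) → ℝ) (ha : Measurable a)
    (haL2 : ∫⁻ x in cubeSet (T - S) n, ENNReal.ofReal (a x ^ 2) < ⊤)
    (hbound : ∀ᵐ t ∂(volume.restrict (simplex S T (n+1))),
      opNorm (k t) ≤ a (fun i : Fin n => t i.castSucc - t i.succ)) :
    MemV S T k ∧
      vNormE S T k ≤ (∫⁻ x in cubeSet (T - S) n, ENNReal.ofReal (a x ^ 2)) ^ (1/2 : ℝ) := by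
  set C : ℝ≥0∞ := ∫⁻ x in cubeSet (T - S) n, ENNReal.ofReal (a x ^ 2) with hC
  have key : vNormE S T k ≤ C ^ (1/2 : ℝ) := by
    have h1 : ∀ᵐ t ∂(volume : Measure (Fin (n+1) → ℝ)),
        t ∈ simplex S T (n+1) →
          opNorm (k t) ≤ a (fun i : Fin n => t i.castSucc - t i.succ) :=
      (ae_restrict_iff' (measurableSet_simplex S T (n+1))).mp hbound
    have h2 : ∀ᵐ p ∂((volume : Measure ℝ).prod (volume : Measure (Fin n → ℝ))),
        ((Fin.snoc p.2 p.1 : Fin (n+1) → ℝ) ∈ simplex S T (n+1) →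
          opNorm (k (Fin.snoc p.2 p.1)) ≤
            a (fun i : Fin n => (Fin.snoc p.2 p.1 : Fin (n+1) → ℝ) i.castSucc
                - (Fin.snoc p.2 p.1 : Fin (n+1) → ℝ) i.succ)) := by
      rw [ae_iff] at h1 ⊢
      exact (snoc_measurePreserving n).quasiMeasurePreserving.preimage_null h1
    have h2' := Measure.ae_ae_of_ae_prod h2
    unfold vNormE
    refine essSup_le_of_ae_le _ ?_
    have h2'' := ae_restrict_of_ae (s := Set.Ioo S T) h2'
    filter_upwards [h2'', ae_restrict_mem measurableSet_Ioo] with t hQ htI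
    refine ENNReal.rpow_le_rpow ?_ (by norm_num)
    calc ∫⁻ s in simplex t T n, ENNReal.ofReal (opNorm (k (Fin.snoc s t)) ^ 2)
        ≤ ∫⁻ s in simplex t T n, ENNReal.ofReal (a (diffMap n t s) ^ 2) := by
          refine lintegral_mono_ae ?_
          filter_upwards [ae_restrict_of_ae hQ, ae_restrict_mem (measurableSet_simplex t T n)]
            with s hs hsmem
          have hb := hs (snoc_mem_simplex htI hsmem)
          rw [snoc_diff_eq] at hb
          exact ENNReal.ofReal_le_ofReal (pow_le_pow_left₀ (norm_nonneg _) hb 2)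
      _ = ∫⁻ s, (simplex t T n).indicator (fun s => ENNReal.ofReal (a (diffMap n t s) ^ 2)) s :=
          (lintegral_indicator (measurableSet_simplex t T n) _).symm
      _ ≤ ∫⁻ s, ((cubeSet (T - S) n).indicator
            (fun x => ENNReal.ofReal (a x ^ 2))) (diffMap n t s) := by
          refine lintegral_mono fun s => ?_
          by_cases hs : s ∈ simplex t T n
          · rw [Set.indicator_of_mem hs,
              Set.indicator_of_mem (diffMap_mem_cube htI.1 htI.2 hs)]
          · rw [Set.indicator_of_notMem hs]; exact zero_le
      _ = ∫⁻ x, ((cubeSet (T - S) n).indicator (fun x => ENNReal.ofReal (a x ^ 2))) x :=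
          (diffMap_measurePreserving n t).lintegral_comp
            (((ha.pow_const 2).ennreal_ofReal).indicator (measurableSet_cubeSet _ _))
      _ = C := lintegral_indicator (measurableSet_cubeSet _ _) _
  have hfin : C ^ (1/2 : ℝ) < ⊤ := ENNReal.rpow_lt_top_of_nonneg (by norm_num) haL2.ne
  exact ⟨⟨hk, lt_of_le_of_lt key hfin⟩, key⟩
end
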